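/- arXiv:2006.01334 — 3 statements merged into one kernel-verified Lean document; each statement's English description precedes it below -/
import Mathlib

section
/- Let R → S be a ring map, I ⊆ S an ideal, n ≥ 1, and S' = S/I^{n+1}. Then the natural map Ω_{S/R} → Ω_{S'/R} induces an isomorphism Ω_{S/R} ⊗_S (S/I^n) ≅ Ω_{S'/R} ⊗_{S'} (S/I^n). -/
open TensorProduct

set_option synthInstance.maxHeartbeats 1000000
set_option maxHeartbeats 2000000

lemma D_pow_mem (R S : Type*) [CommRing R] [CommRing S] [Algebra R S]
    (I : Ideal S) : ∀ (k : ℕ) (x : S), x ∈ I ^ (k + 1) →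
    KaehlerDifferential.D R S x ∈ I ^ k • (⊤ : Submodule S (Ω[S⁄R])) := by
  intro k
  induction k with
  | zero => intro x hx; simp
  | succ k ih =>
    intro x hx
    rw [pow_succ] at hx
    refine Submodule.mul_induction_on hx (fun a ha b hb => ?_) (fun y z hy hz => ?_)
    · rw [Derivation.leibniz]
      refine Submodule.add_mem _ ?_ ?_
      · exact Submodule.smul_mem_smul ha trivial
      · have h2 : b • KaehlerDifferential.D R S a ∈ I • (I ^ k • (⊤ : Submodule S (Ω[S⁄R]))) :=
          Submodule.smul_mem_smul hb (ih a ha)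
        rwa [← Submodule.smul_assoc, smul_eq_mul, mul_comm, ← pow_succ] at h2
    · rw [map_add]; exact Submodule.add_mem _ hy hz

/-- Let `R → S` be a ring map, `I ⊆ S` an ideal, `n ≥ 1`, and `S' = S/I^(n+1)`.
Then the natural map `Ω[S⁄R] → Ω[S'⁄R]` induces an isomorphism
`Ω[S⁄R] ⊗_S (S/Iⁿ) ≅ Ω[S'⁄R] ⊗_{S'} (S/Iⁿ)`. -/
theorem kaehler_quotient_pow_succ_iso
    (R S : Type*) [CommRing R] [CommRing S] [Algebra R S]
    (I : Ideal S) (n : ℕ) (hn : 1 ≤ n) :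
    letI : Algebra (S ⧸ I ^ (n + 1)) (S ⧸ I ^ n) :=
      Ideal.Quotient.algebraQuotientOfLEComap (R := S) (A := S)
        (by simpa using Ideal.pow_le_pow_right n.le_succ)
    Nonempty (((S ⧸ I ^ n) ⊗[S] (Ω[S⁄R])) ≃ₗ[S ⧸ I ^ n]
      ((S ⧸ I ^ n) ⊗[S ⧸ I ^ (n + 1)] (Ω[(S ⧸ I ^ (n + 1))⁄R]))) := by
  letI alg : Algebra (S ⧸ I ^ (n + 1)) (S ⧸ I ^ n) :=
    Ideal.Quotient.algebraQuotientOfLEComap (R := S) (A := S)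
      (by simpa using Ideal.pow_le_pow_right n.le_succ)
  show Nonempty _
  set S' := S ⧸ I ^ (n + 1) with hS'
  set Q := S ⧸ I ^ n with hQ
  haveI : IsScalarTower S S' Q := IsScalarTower.of_algebraMap_eq (fun x => rfl)
  set ψ : S' ⊗[S] (Ω[S⁄R]) →ₗ[S'] Ω[S'⁄R] := KaehlerDifferential.mapBaseChange R S S' with hψdef
  set φ : Q ⊗[S'] (S' ⊗[S] (Ω[S⁄R])) →ₗ[Q] Q ⊗[S'] (Ω[S'⁄R]) := ψ.baseChange Q with hφdef
  have hψ : Function.Surjective ψ :=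
    KaehlerDifferential.mapBaseChange_surjective R S S' Ideal.Quotient.mk_surjective
  have hφsurj : Function.Surjective φ := by
    intro y
    induction y using TensorProduct.induction_on with
    | zero => exact ⟨0, map_zero _⟩
    | tmul q ω =>
      obtain ⟨p, rfl⟩ := hψ ω
      exact ⟨q ⊗ₜ p, by rw [hφdef, LinearMap.baseChange_tmul]⟩
    | add y z hy hz =>
      obtain ⟨a, rfl⟩ := hy; obtain ⟨b, rfl⟩ := hz
      exact ⟨a + b, map_add _ _ _⟩
  -- all tensors q ⊗ k with k ∈ ker ψ vanish
  have hker : ∀ (q : Q) (k : S' ⊗[S] (Ω[S⁄R])), k ∈ LinearMap.ker ψ →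
      (q ⊗ₜ[S'] k : Q ⊗[S'] (S' ⊗[S] (Ω[S⁄R]))) = 0 := by
    intro q k hk
    have hk' : k ∈ LinearMap.range (KaehlerDifferential.kerCotangentToTensor R S S') := by
      rw [KaehlerDifferential.range_kerCotangentToTensor R S S'
        Ideal.Quotient.mk_surjective]
      exact hk
    obtain ⟨z, rfl⟩ := hk'
    obtain ⟨⟨x, hx⟩, rfl⟩ := Ideal.toCotangent_surjective _ z
    rw [KaehlerDifferential.kerCotangentToTensor_toCotangent]
    have hx' : x ∈ I ^ (n + 1) := by
      have h0 : RingHom.ker (algebraMap S S') = I ^ (n + 1) := by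
        rw [Ideal.Quotient.algebraMap_eq, Ideal.mk_ker]
      rwa [h0] at hx
    have hD := D_pow_mem R S I n x hx'
    have main : ∀ ω ∈ I ^ n • (⊤ : Submodule S (Ω[S⁄R])),
        (q ⊗ₜ[S'] ((1 : S') ⊗ₜ[S] ω) : Q ⊗[S'] (S' ⊗[S] (Ω[S⁄R]))) = 0 := by
      intro ω hω
      refine Submodule.smul_induction_on hω (fun a ha m _ => ?_) (fun y z hy hz => ?_)
      · rw [tmul_smul, ← algebraMap_smul S' a, tmul_smul, smul_tmul', algebraMap_smul]
        have h1 : a • q = 0 := by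
          rw [Algebra.smul_def, Ideal.Quotient.algebraMap_eq,
            Ideal.Quotient.eq_zero_iff_mem.mpr ha, zero_mul]
        rw [h1, zero_tmul]
      · rw [tmul_add, tmul_add, hy, hz, add_zero]
    exact main _ hD
  have hφinj : Function.Injective φ := by
    rw [injective_iff_map_eq_zero]
    intro y hy
    have hex : Function.Exact (LinearMap.lTensor Q (LinearMap.ker ψ).subtype)
        (LinearMap.lTensor Q ψ) :=
      lTensor_exact (M := LinearMap.ker ψ) Q (LinearMap.exact_subtype_ker_map ψ) hψ
    have hy' : LinearMap.lTensor Q ψ y = 0 := by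
      have : ⇑φ = ⇑(LinearMap.lTensor Q ψ) := LinearMap.baseChange_eq_ltensor ψ
      rw [← congrFun this y, hy]
    suffices h : ∀ z, LinearMap.lTensor Q (LinearMap.ker ψ).subtype z = 0 by
      obtain ⟨z, rfl⟩ := (hex y).mp hy'
      exact h z
    intro z
    induction z using TensorProduct.induction_on with
    | zero => exact map_zero _
    | tmul q k =>
      rw [LinearMap.lTensor_tmul]
      exact hker q k.1 k.2
    | add y z hy hz =>
      rw [map_add, hy, hz, add_zero]
  letI e2 : Q ⊗[S'] (S' ⊗[S] (Ω[S⁄R])) ≃ₗ[Q] Q ⊗[S'] (Ω[S'⁄R]) :=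
    LinearEquiv.ofBijective φ ⟨hφinj, hφsurj⟩
  letI e1 : Q ⊗[S] (Ω[S⁄R]) ≃ₗ[Q] Q ⊗[S'] (S' ⊗[S] (Ω[S⁄R])) :=
    (AlgebraTensorModule.cancelBaseChange S S' Q Q (Ω[S⁄R])).symm
  exact ⟨e1 ≪≫ₗ e2⟩
end

section
/- Let T be a formally smooth k-algebra over a field k and J ⊆ T an ideal. Then R = T/J is formally smooth over k if and only if the conormal sequence J/J² → Ω_{T/k} ⊗_T R → Ω_{R/k} → 0 is split exact (i.e., the first map is injective and the sequence splits). -/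
universe u

open KaehlerDifferential

/-- Let `T` be a formally smooth `k`-algebra over a field `k` (of characteristic `0`) and
`J ⊆ T` an ideal. Then `R = T/J` is formally smooth over `k` if and only if the conormal
sequence `J/J² → Ω[T⁄k] ⊗[T] R → Ω[R⁄k] → 0` is split exact, i.e. the first map is
injective, the sequence is exact, and the first map admits a retraction. -/

theorem formallySmooth_iff_conormal_split_exact
    (k T : Type u) [Field k] [CharZero k] [CommRing T] [Algebra k T]
    [Algebra.FormallySmooth k T] (J : Ideal T) :
    Algebra.FormallySmooth k (T ⧸ J) ↔
      (Function.Injective (kerCotangentToTensor k T (T ⧸ J)) ∧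
        Function.Exact (kerCotangentToTensor k T (T ⧸ J))
          (mapBaseChange k T (T ⧸ J)) ∧
        Function.Surjective (mapBaseChange k T (T ⧸ J)) ∧
        ∃ l, l ∘ₗ kerCotangentToTensor k T (T ⧸ J) = LinearMap.id) := by
  have hf : Function.Surjective (algebraMap T (T ⧸ J)) := Ideal.Quotient.mk_surjective
  rw [Algebra.FormallySmooth.iff_split_injection hf]
  constructor
  · rintro ⟨l, hl⟩
    refine ⟨?_, exact_kerCotangentToTensor_mapBaseChange k T _ hf,
      mapBaseChange_surjective k T _ hf, ⟨l, hl⟩⟩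
    intro x y h
    have := LinearMap.congr_fun hl
    simpa using (this x).symm.trans ((congrArg l h).trans (this y))
  · rintro ⟨_, _, _, h⟩
    exact h
end

section
/- Let T be a Noetherian ring, J ⊆ T an ideal, T̂ the J-adic completion, and I ⊇ J an ideal. Then for every T-module M on which every element is killed by a power of J, the natural map M → M ⊗_T T̂ is an isomorphism; in particular the natural map H^q_I(T) → H^q_I(T̂) = H^q_I(T) ⊗_T T̂ is an isomorphism for every q when T is Noetherian and every element of H^q_I(T) is J-power torsion. -/
open TensorProduct

section AuxAdic

variable {T : Type*} [CommRing T] (J : Ideal T)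

/-- Transition compatibility for `AdicCompletion.evalₐ`. -/
lemma AdicCompletion.evalₐ_factor {k l : ℕ} (hkl : k ≤ l) (x : AdicCompletion J T) :
    Ideal.Quotient.factor (Ideal.pow_le_pow_right hkl)
      (AdicCompletion.evalₐ J l x) = AdicCompletion.evalₐ J k x := by
  induction x using AdicCompletion.induction_on with
  | h a =>
    rw [AdicCompletion.evalₐ_mk, AdicCompletion.evalₐ_mk, Ideal.Quotient.factor_mk,
      AdicCompletion.Ideal.mk_eq_mk J hkl]

variable [IsNoetherianRing T]

/-- If `x` in the `J`-adic completion of a Noetherian ring `T` maps to zero in `T ⧸ J ^ n`,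
then `x ∈ J ^ n • ⊤`. -/
lemma AdicCompletion.mem_smul_top_of_evalₐ_eq_zero (n : ℕ) (x : AdicCompletion J T)
    (hx : AdicCompletion.evalₐ J n x = 0) :
    x ∈ (J ^ n • ⊤ : Submodule T (AdicCompletion J T)) := by
  classical
  have hideal : (J ^ n • ⊤ : Submodule T T) = (J ^ n : Ideal T) := by ext y; simp
  set S : Submodule T T := (J ^ n : Ideal T)
  set f : S →ₗ[T] T := S.subtype with hf
  set g : T →ₗ[T] T ⧸ (J ^ n • ⊤ : Submodule T T) := Submodule.mkQ _ with hg
  have hfinj : Function.Injective f := Submodule.injective_subtype S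
  have hgsurj : Function.Surjective g := Submodule.mkQ_surjective _
  have hfg : Function.Exact f g := by
    rw [LinearMap.exact_iff]
    rw [hg, Submodule.ker_mkQ, hf, Submodule.range_subtype, hideal]
  have hexact := AdicCompletion.map_exact (I := J) hfinj hfg hgsurj
  -- x is killed by the completed quotient map
  have hzero : AdicCompletion.map J g x = 0 := by
    induction x using AdicCompletion.induction_on with
    | h a =>
      have han : a.val n ∈ (J ^ n • ⊤ : Submodule T T) := by
        rw [AdicCompletion.evalₐ_mk] at hx
        rw [hideal, ← Ideal.Quotient.eq_zero_iff_mem]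
        exact hx
      rw [AdicCompletion.map_mk]
      ext k
      rw [AdicCompletion.mk_apply_coe, AdicCompletion.val_zero]
      simp only [AdicCompletion.AdicCauchySequence.map_apply_coe]
      rw [Submodule.mkQ_apply, Pi.zero_apply, Submodule.Quotient.mk_eq_zero]
      have hak : a.val k ∈ (J ^ (min k n) • ⊤ : Submodule T T) := by
        have h1 : a.val k - a.val n ∈ (J ^ (min k n) • ⊤ : Submodule T T) := by
          rcases le_total k n with h | h
          · simpa [min_eq_left h] using
              (Submodule.Quotient.eq _).mp (AdicCompletion.AdicCauchySequence.mk_eq_mk h a).symm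
          · simpa [min_eq_right h] using
              (Submodule.Quotient.eq _).mp (AdicCompletion.AdicCauchySequence.mk_eq_mk h a)
        have h2 : a.val n ∈ (J ^ (min k n) • ⊤ : Submodule T T) :=
          Submodule.smul_mono_left (Ideal.pow_le_pow_right (min_le_right k n)) han
        simpa using Submodule.add_mem _ h1 h2
      rcases le_total k n with h | h
      · -- image of J^k • ⊤
        have : g (a.val k) ∈ (J ^ k • ⊤ : Submodule T (T ⧸ (J ^ n • ⊤ : Submodule T T))) := by
          have : a.val k ∈ (J ^ k • ⊤ : Submodule T T) := by
            simpa [min_eq_left h] using hak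
          have hmem := Submodule.mem_map_of_mem (f := g) this
          rw [Submodule.map_smul'', Submodule.map_top] at hmem
          exact Submodule.smul_mono le_rfl le_top hmem
        exact this
      · have : a.val k ∈ (J ^ n • ⊤ : Submodule T T) := by
          simpa [min_eq_right h] using hak
        have : g (a.val k) = 0 := by
          rw [hg, Submodule.mkQ_apply, Submodule.Quotient.mk_eq_zero]
          exact this
        rw [this]
        exact Submodule.zero_mem _
  -- hence x is in the image of the completion of J^n
  obtain ⟨y, hy⟩ := (hexact x).mp hzero
  -- y comes from the tensor product
  haveI : Module.Finite T S := inferInstance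
  obtain ⟨w, hw⟩ := AdicCompletion.ofTensorProduct_surjective_of_finite J S y
  rw [← hy, ← hw]
  clear hy hw hzero hx
  induction w using TensorProduct.induction_on with
  | zero => simp
  | add u v hu hv =>
    rw [map_add, map_add]
    exact Submodule.add_mem _ hu hv
  | tmul r v =>
    rw [AdicCompletion.ofTensorProduct_tmul, map_smul]
    have hofv : AdicCompletion.map J f (AdicCompletion.of J S v) =
        (v : T) • (1 : AdicCompletion J T) := by
      ext k
      rw [AdicCompletion.map_val_apply]
      rw [AdicCompletion.val_smul_apply, AdicCompletion.val_one]
      show (f.reduceModIdeal (J ^ k)) ((AdicCompletion.of J S v).val k) = _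
      rw [AdicCompletion.of_apply, Submodule.mkQ_apply, LinearMap.reduceModIdeal_apply]
      rw [show (1 : T ⧸ (J ^ k • ⊤ : Submodule T T)) = Submodule.Quotient.mk 1 from rfl,
        ← Submodule.Quotient.mk_smul]
      simp [hf]
    rw [hofv, smul_comm r ((v : T)) (1 : AdicCompletion J T)]
    exact Submodule.smul_mem_smul v.2 Submodule.mem_top
end AuxAdic

/-- Let `T` be a Noetherian ring, `J ⊆ I` ideals, and `T̂` the `J`-adic completion.  For
every `T`-module `M` on which every element is killed by a power of `J` (such as the
local cohomology modules `H^q_I(T)`), the natural map `M → T̂ ⊗_T M`, `m ↦ 1 ⊗ m`, is an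
isomorphism. -/
theorem jPowerTorsion_tensor_adicCompletion_bijective
    (T : Type*) [CommRing T] [IsNoetherianRing T] (J I : Ideal T) (hJI : J ≤ I)
    (M : Type*) [AddCommGroup M] [Module T M]
    (htors : ∀ m : M, ∃ n : ℕ, ∀ a ∈ J ^ n, a • m = 0) :
    Function.Bijective (TensorProduct.mk T (AdicCompletion J T) M 1) := by
  classical
  set Th := AdicCompletion J T with hTh
  let nn : M → ℕ := fun m => (htors m).choose
  have hnn : ∀ m, ∀ a ∈ J ^ (nn m), a • m = 0 := fun m => (htors m).choose_spec
  have hmono : ∀ {k l : ℕ}, k ≤ l → ∀ (m : M), (∀ a ∈ J ^ k, a • m = 0) →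
      ∀ a ∈ J ^ l, a • m = 0 :=
    fun {k l} hkl m hm a ha => hm a (Ideal.pow_le_pow_right hkl ha)
  have hA : ∀ (k : ℕ) (m : M), (∀ a ∈ J ^ k, a • m = 0) → ∀ t₁ t₂ : T,
      Ideal.Quotient.mk (J ^ k) t₁ = Ideal.Quotient.mk (J ^ k) t₂ → t₁ • m = t₂ • m := by
    intro k m hm t₁ t₂ ht
    have hsub : t₁ - t₂ ∈ J ^ k := Ideal.Quotient.eq.mp ht
    have h0 := hm _ hsub
    rw [sub_smul] at h0
    exact sub_eq_zero.mp h0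
  let rep : ∀ (_ : ℕ), Th → T := fun k x => (AdicCompletion.evalₐ J k x).out
  have hrep : ∀ k x, Ideal.Quotient.mk (J ^ k) (rep k x) = AdicCompletion.evalₐ J k x :=
    fun k x => Quotient.out_eq' _
  let β : Th → M → M := fun x m => rep (nn m) x • m
  have hC : ∀ (x : Th) (m : M) (k : ℕ), (∀ a ∈ J ^ k, a • m = 0) → β x m = rep k x • m := by
    intro x m k hk
    have step : ∀ (k' l : ℕ), k' ≤ l → (∀ a ∈ J ^ k', a • m = 0) →
        rep k' x • m = rep l x • m := by
      intro k' l h hk'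
      refine hA k' m hk' _ _ ?_
      rw [hrep, ← AdicCompletion.evalₐ_factor J h x, ← hrep l x, Ideal.Quotient.factor_mk]
    rw [show β x m = rep (nn m) x • m from rfl,
      step (nn m) (max (nn m) k) (le_max_left _ _) (hnn m),
      step k (max (nn m) k) (le_max_right _ _) hk]
  have hadd_x : ∀ (x y : Th) (m : M), β (x + y) m = β x m + β y m := by
    intro x y m
    have h1 : Ideal.Quotient.mk (J ^ nn m) (rep (nn m) (x + y)) =
        Ideal.Quotient.mk (J ^ nn m) (rep (nn m) x + rep (nn m) y) := by
      rw [map_add, hrep, hrep, hrep, map_add]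
    have h2 := hA (nn m) m (hnn m) _ _ h1
    rw [add_smul] at h2
    exact h2
  have hsmul_x : ∀ (c : T) (x : Th) (m : M), β (c • x) m = c • β x m := by
    intro c x m
    have h1 : Ideal.Quotient.mk (J ^ nn m) (rep (nn m) (c • x)) =
        Ideal.Quotient.mk (J ^ nn m) (c * rep (nn m) x) := by
      rw [map_mul, hrep, map_smul, hrep]
      rw [Algebra.smul_def, Ideal.Quotient.algebraMap_eq]
    have h2 := hA (nn m) m (hnn m) _ _ h1
    rw [mul_smul] at h2
    exact h2
  have hadd_m : ∀ (x : Th) (m₁ m₂ : M), β x (m₁ + m₂) = β x m₁ + β x m₂ := by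
    intro x m₁ m₂
    set N := max (nn m₁) (max (nn m₂) (nn (m₁ + m₂))) with hN
    have h1 : ∀ a ∈ J ^ N, a • m₁ = 0 := hmono (le_max_left _ _) _ (hnn m₁)
    have h2 : ∀ a ∈ J ^ N, a • m₂ = 0 :=
      hmono ((le_max_left _ _).trans (le_max_right _ _)) _ (hnn m₂)
    have h3 : ∀ a ∈ J ^ N, a • (m₁ + m₂) = 0 :=
      hmono ((le_max_right _ _).trans (le_max_right _ _)) _ (hnn (m₁ + m₂))
    rw [hC x (m₁ + m₂) N h3, hC x m₁ N h1, hC x m₂ N h2, smul_add]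
  have hsmul_m : ∀ (c : T) (x : Th) (m : M), β x (c • m) = c • β x m := by
    intro c x m
    have hcm : ∀ a ∈ J ^ nn m, a • (c • m) = 0 := by
      intro a ha
      rw [smul_comm, hnn m a ha, smul_zero]
    rw [hC x (c • m) (nn m) hcm, show β x m = rep (nn m) x • m from rfl, smul_comm]
  let B : Th →ₗ[T] M →ₗ[T] M := LinearMap.mk₂ T β hadd_x hsmul_x hadd_m hsmul_m
  let g : Th ⊗[T] M →ₗ[T] M := TensorProduct.lift B
  have hg1 : ∀ m : M, g ((TensorProduct.mk T Th M 1) m) = m := by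
    intro m
    have h1 : Ideal.Quotient.mk (J ^ nn m) (rep (nn m) (1 : Th)) =
        Ideal.Quotient.mk (J ^ nn m) 1 := by
      rw [hrep, map_one, map_one]
    have h2 := hA (nn m) m (hnn m) _ _ h1
    rw [one_smul] at h2
    simpa [g, B, TensorProduct.lift.tmul] using h2
  have hsurj : Function.Surjective (TensorProduct.mk T Th M 1) := by
    intro z
    induction z using TensorProduct.induction_on with
    | zero => exact ⟨0, map_zero _⟩
    | add u v hu hv =>
      obtain ⟨a, ha⟩ := hu
      obtain ⟨b, hb⟩ := hv
      exact ⟨a + b, by rw [map_add, ha, hb]⟩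
    | tmul x m =>
      refine ⟨rep (nn m) x • m, ?_⟩
      set t := rep (nn m) x with hts
      have hx0 : AdicCompletion.evalₐ J (nn m) (x - t • 1) = 0 := by
        rw [map_sub, map_smul, map_one, ← hrep (nn m) x, ← hts]
        rw [Algebra.smul_def, Ideal.Quotient.algebraMap_eq, mul_one, sub_self]
      have hmem := AdicCompletion.mem_smul_top_of_evalₐ_eq_zero J (nn m) _ hx0
      have hzero : (x - t • (1 : Th)) ⊗ₜ[T] m = 0 := by
        refine Submodule.smul_induction_on (p := fun y => y ⊗ₜ[T] m = 0) hmem ?_ ?_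
        · intro a ha y _
          rw [TensorProduct.smul_tmul, hnn m a (by exact ha), TensorProduct.tmul_zero]
        · intro u v hu hv
          rw [TensorProduct.add_tmul, hu, hv, add_zero]
      rw [TensorProduct.sub_tmul] at hzero
      have hxy : x ⊗ₜ[T] m = (t • (1 : Th)) ⊗ₜ[T] m := sub_eq_zero.mp hzero
      rw [TensorProduct.mk_apply, ← TensorProduct.smul_tmul, ← hxy]
  exact ⟨Function.LeftInverse.injective hg1, hsurj⟩
end
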